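/- Obstruction to right a-multiplication: let s = s(g,a) be a souped-up Lie algebra containing elements a ∈ a and g ∈ g with [g,[g,a]] = 1 (where [g,·] denotes the derivation action of g on a and 1 is the unit of a). Then for any choice of locality function N, the ideal J of F(s) generated by the souped-up vertex algebra ideal I(s) together with the single element g ∘₋₁ a − a·g contains the element 1; consequently J = F(s) and the quotient F(s)/J is zero. (Such elements exist, e.g. g = d/db and a = b²/2 in the souped-up Lie algebra of vector fields and differentiable functions on the real line.) -/

import Mathlib

noncomputable section

/-!
Common framework: "infinite free algebras" in the sense of Eller, *Chiral vector bundles*.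

An infinite free algebra (completed) is modelled as a topological vector space `F`
over a field `k` of characteristic zero, with a distinguished vector `one` and a
`ℤ`-indexed family of bilinear products `circ n`.  The formal infinite sums provided
by the completion are interpreted by `tsum` (`∑'`).  An ideal is a subspace closed
under all the products (on both sides) and under convergent (formal) infinite sums.
-/

/-- An infinite free algebra (completed). -/
structure IFA (k F : Type) [Field k] [CharZero k] [AddCommGroup F] [Module k F]
    [TopologicalSpace F] where
  /-- the distinguished vector `1` -/
  one : F
  /-- the products `∘ₙ`; `circ n x y` is `x ∘ₙ y` -/
  circ : ℤ → F → F → F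
  circ_add_left : ∀ (n : ℤ) (x x' y : F), circ n (x + x') y = circ n x y + circ n x' y
  circ_add_right : ∀ (n : ℤ) (x y y' : F), circ n x (y + y') = circ n x y + circ n x y'
  circ_smul_left : ∀ (n : ℤ) (c : k) (x y : F), circ n (c • x) y = c • circ n x y
  circ_smul_right : ∀ (n : ℤ) (c : k) (x y : F), circ n x (c • y) = c • circ n x y

namespace IFA

/-- The binomial coefficient `C(m, K)` for `m : ℤ`, `K : ℕ`, as an element of `k`. -/
def zbinom (k : Type) [Field k] [CharZero k] (m : ℤ) (K : ℕ) : k :=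
  (∏ i ∈ Finset.range K, ((m : k) - (i : k))) / (K.factorial : k)

variable {k F : Type} [Field k] [CharZero k] [AddCommGroup F] [Module k F]
  [TopologicalSpace F] (A : IFA k F)

/-- `D x := x ∘₋₂ 1`. -/
def D (x : F) : F := A.circ (-2) x A.one

/-- identity generators `i⟦x;n⟧ := 1ₙx − δ_{n,−1}x` -/
def geni (x : F) (n : ℤ) : F := A.circ n A.one x - (if n = -1 then x else 0)

/-- derivation generators `d⟦x,y;n⟧ := D(xₙy) − (Dx)ₙy − xₙ(Dy)` -/
def gend (x y : F) (n : ℤ) : F :=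
  A.D (A.circ n x y) - A.circ n (A.D x) y - A.circ n x (A.D y)

/-- shift generators `e⟦x,y;n⟧ := (Dx)ₙy + n·x_{n−1}y` -/
def gene (x y : F) (n : ℤ) : F := A.circ n (A.D x) y + (n : k) • A.circ (n - 1) x y

/-- quasi-commutativity generators
`qc⟦x,y;n⟧ := xₙy + Σ_{K≥0}((−1)^{n+K}/K!)·D^K(y_{n+K}x)` -/
def genqc (x y : F) (n : ℤ) : F :=
  A.circ n x y +
    ∑' K : ℕ, (((-1 : k) ^ (n + (K : ℤ))) * ((K.factorial : k)⁻¹)) •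
      (A.D)^[K] (A.circ (n + (K : ℤ)) y x)

/-- quasi-associativity generators
`qa⟦x,y,z;m,n⟧ := (x_my)_nz − Σ_{K≥0} C(m,K)(−1)^K (x_{m−K}(y_{n+K}z) − (−1)^m y_{m+n−K}(x_Kz))` -/
def genqa (x y z : F) (m n : ℤ) : F :=
  A.circ n (A.circ m x y) z -
    ∑' K : ℕ, ((zbinom k m K) * ((-1 : k) ^ K)) •
      (A.circ (m - (K : ℤ)) x (A.circ (n + (K : ℤ)) y z)
        - ((-1 : k) ^ m) • A.circ (m + n - (K : ℤ)) y (A.circ (K : ℤ) x z))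

/-- An ideal of the (completed) infinite free algebra: a subspace closed under all the
products `∘ₙ` by arbitrary elements on both sides, and under the formal (convergent)
infinite sums provided by the completion. -/
def IsIdeal (J : Submodule k F) : Prop :=
  (∀ (n : ℤ) (x y : F), y ∈ J → A.circ n x y ∈ J ∧ A.circ n y x ∈ J) ∧
    (∀ f : ℕ → F, (∀ i, f i ∈ J) → Summable f → (∑' i, f i) ∈ J)

/-- The ideal generated by a set `S ⊆ F`. -/
def idealGenBy (S : Set F) : Submodule k F := sInf {J | A.IsIdeal J ∧ S ⊆ J}

/-- The generators of the vertex algebra ideal other than the locality generators: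
`i⟦x;n⟧, d⟦x,y;n⟧, qc⟦x,y;n⟧` for `n = −1` and all `n ≥ 0`; `qa⟦x,y,z;m,n⟧` for
`m, n ∈ {−1,0,1,2,…}`; and `e⟦x,y;n⟧` for all `n ∈ ℤ`. -/
def baseGens : Set F :=
  {w | ∃ (x : F) (n : ℤ), -1 ≤ n ∧ w = A.geni x n} ∪
  {w | ∃ (x y : F) (n : ℤ), -1 ≤ n ∧ w = A.gend x y n} ∪
  {w | ∃ (x y : F) (n : ℤ), -1 ≤ n ∧ w = A.genqc x y n} ∪
  {w | ∃ (x y z : F) (m n : ℤ), -1 ≤ m ∧ -1 ≤ n ∧ w = A.genqa x y z m n} ∪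
  {w | ∃ (x y : F) (n : ℤ), w = A.gene x y n}

/-- The vertex algebra ideal `I` associated to the locality function `N : F × F → ℕ`:
the ideal generated by the base generators together with the locality elements
`xₙy` for all `x, y ∈ F` and `n ≥ N(x,y)`. -/
def vertexIdeal (N : F → F → ℕ) : Submodule k F :=
  A.idealGenBy
    (A.baseGens ∪ {w | ∃ (x y : F) (n : ℤ), (N x y : ℤ) ≤ n ∧ w = A.circ n x y})

end IFA
/-!
Concrete construction of the (completed) infinite free algebra `F(v)` generated by a
unital vector space `v`: product shapes are binary trees with integer-labelled internal
nodes; the span of the monomials of a fixed shape is the corresponding iterated tensor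
power of `v`; and the completion (allowing formal infinite sums of monomials of pairwise
distinct product shapes) is the direct product over all shapes.  Each shape component
carries the discrete topology and `F(v)` the product topology, so that a family is
summable exactly when every shape component receives only finitely many contributions.
-/

/-- Product shapes: full binary rooted trees with an integer at each internal node. -/
inductive Shape : Type
  | leaf : Shape
  | node : ℤ → Shape → Shape → Shape
  deriving DecidableEq

/-- A bundled `k`-vector space. -/
structure MC (k : Type) [Field k] where
  T : Type
  [grp : AddCommGroup T]
  [mod : Module k T]

attribute [instance] MC.grp MC.mod

variable (k : Type) [Field k] [CharZero k] (V : Type) [AddCommGroup V] [Module k V]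

/-- The space spanned by the monomials of a given product shape (bundled). -/
def monData : Shape → MC k
  | .leaf => MC.mk V
  | .node _ l r => MC.mk (TensorProduct k (monData l).T (monData r).T)

/-- The space spanned by the monomials of a given product shape. -/
abbrev MonSp (s : Shape) : Type := (monData k V s).T

instance (s : Shape) : TopologicalSpace (MonSp k V s) := ⊥

/-- The completed infinite free algebra `F(v)` on the (unital) vector space `v = V`. -/
abbrev FV : Type := ∀ s : Shape, MonSp k V s

/-- The embedding of the generating space `v` into `F(v)` (the length-1 component). -/
def ι (a : V) : FV k V := fun s =>
  match s with
  | .leaf => a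
  | .node _ _ _ => 0

/-- The product `x ∘ₙ y` on `F(v)`. -/
def op (n : ℤ) (x y : FV k V) : FV k V := fun s =>
  match s with
  | .leaf => 0
  | .node m l r => if n = m then TensorProduct.tmul k (x l) (y r) else 0

/-- `F(v)` as an infinite free algebra, with distinguished vector the image of the
distinguished vector `e ∈ v`. -/
def freeIFA (e : V) : IFA k (FV k V) where
  one := ι k V e
  circ := op k V
  circ_add_left := by
    intro n x x' y; funext s
    cases s with
    | leaf => simp [op]
    | node m l r =>
        by_cases h : n = m <;>
          simp [op, h, Pi.add_apply, TensorProduct.add_tmul] <;> rfl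
  circ_add_right := by
    intro n x y y'; funext s
    cases s with
    | leaf => simp [op]
    | node m l r =>
        by_cases h : n = m <;>
          simp [op, h, Pi.add_apply, TensorProduct.tmul_add] <;> rfl
  circ_smul_left := by
    intro n c x y; funext s
    cases s with
    | leaf => simp [op]
    | node m l r =>
        by_cases h : n = m
        · simp only [op, h, if_true, Pi.smul_apply]
          exact (TensorProduct.smul_tmul' c (x l) (y r)).symm
        · simp [op, h]
  circ_smul_right := by
    intro n c x y; funext s
    cases s with
    | leaf => simp [op]
    | node m l r =>
        by_cases h : n = m <;>
          simp [op, h, Pi.smul_apply, TensorProduct.tmul_smul] <;> rfl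

/-- The vertex algebra ideal `I(v)` of `F(v)`: generated by the base generators
together with the locality elements `uₙv` for `u, v ∈ v` (the generating space) and
`n ≥ N(u,v)`. -/
def genVertexIdeal (e : V) (N : V → V → ℕ) : Submodule k (FV k V) :=
  (freeIFA k V e).idealGenBy
    ((freeIFA k V e).baseGens ∪
      {w | ∃ (a b : V) (n : ℤ), (N a b : ℤ) ≤ n ∧ w = op k V n (ι k V a) (ι k V b)})
/-!
Souped-up Lie algebras `s = s(g, a)`: an associative commutative unital `k`-algebra `a`
and a `k`-Lie algebra `g` such that `g` is a left `a`-module, `a` is a `g`-module on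
which `g` acts by derivations, compatibly.  The underlying unital vector space of the
semidirect sum `s = g ⊕ a` is modelled as `L × A` with distinguished vector `(0, 1)`.
-/

/-- The action data making `(g, a) = (L, A)` a souped-up Lie algebra: `g` acts on `a`
by derivations, the action is a Lie algebra action, and it is compatible with the
`a`-module structure of `g` in that `[g, a·h] = [g,a]·h + a·[g,h]`. -/
structure SoupAct (k A L : Type) [Field k] [CharZero k] [CommRing A] [Algebra k A]
    [LieRing L] [LieAlgebra k L] [Module A L] [IsScalarTower k A L] where
  act : L →ₗ[k] A →ₗ[k] A
  act_deriv : ∀ (g : L) (a b : A), act g (a * b) = act g a * b + a * act g b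
  act_bracket : ∀ (g h : L) (a : A), act ⁅g, h⁆ a = act g (act h a) - act h (act g a)
  act_smul_bracket : ∀ (g : L) (a : A) (h : L), ⁅g, a • h⁆ = act g a • h + a • ⁅g, h⁆

namespace SoupAct

variable {k A L : Type} [Field k] [CharZero k] [CommRing A] [Algebra k A]
  [LieRing L] [LieAlgebra k L] [Module A L] [IsScalarTower k A L]

/-- The Lie bracket of the semidirect sum Lie algebra `s = g ⊕ a` (`a` abelian):
`[(g,a), (h,b)] = ([g,h], g·b − h·a)`. -/
def sBracket (σ : SoupAct k A L) (p q : L × A) : L × A :=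
  (⁅p.1, q.1⁆, σ.act p.1 q.2 - σ.act q.1 p.2)

end SoupAct

/-- Left multiplication by `a ∈ a` on `s = g ⊕ a`. -/
def aMul {A L : Type} [Mul A] [SMul A L] (c : A) (p : L × A) : L × A :=
  (c • p.1, c * p.2)

/-- The distinguished vector `1 = (0, 1)` of `s`. -/
def sOne (A L : Type) [CommRing A] [LieRing L] : L × A := ((0 : L), (1 : A))

variable (k : Type) [Field k] [CharZero k] (A : Type) [CommRing A] [Algebra k A]
  (L : Type) [LieRing L] [LieAlgebra k L] [Module A L] [IsScalarTower k A L]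

/-- The additional generators of the souped-up vertex algebra ideal:
`s⟦s,t⟧ := s₀t − [s,t]`, `a⟦a,s⟧ := a₋₁s − a·s`, and
`am⟦a,b,x⟧ := (ab)₋₁x − a₋₁(b₋₁x)` (the latter being linear in `x`, it is imposed for
all `x ∈ F(s)`, equivalently for all monomials). -/
def soupGens (σ : SoupAct k A L) : Set (FV k (L × A)) :=
  {w | ∃ p q : L × A,
      w = op k (L × A) 0 (ι k (L × A) p) (ι k (L × A) q) - ι k (L × A) (σ.sBracket p q)} ∪
  {w | ∃ (c : A) (p : L × A),
      w = op k (L × A) (-1) (ι k (L × A) ((0 : L), c)) (ι k (L × A) p)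
            - ι k (L × A) (aMul c p)} ∪
  {w | ∃ (c d : A) (x : FV k (L × A)),
      w = op k (L × A) (-1) (ι k (L × A) ((0 : L), c * d)) x
            - op k (L × A) (-1) (ι k (L × A) ((0 : L), c))
                (op k (L × A) (-1) (ι k (L × A) ((0 : L), d)) x)}

/-- The full generating set of the souped-up vertex algebra ideal `I(s)`. -/
def soupGensAll (σ : SoupAct k A L) (N : (L × A) → (L × A) → ℕ) : Set (FV k (L × A)) :=
  (freeIFA k (L × A) (sOne A L)).baseGens ∪
    {w | ∃ (p q : L × A) (n : ℤ), (N p q : ℤ) ≤ n ∧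
        w = op k (L × A) n (ι k (L × A) p) (ι k (L × A) q)} ∪
    soupGens k A L σ

/-- The souped-up vertex algebra ideal `I(s)` associated to the locality function
`N : s × s → ℕ`. -/
def soupIdeal (σ : SoupAct k A L) (N : (L × A) → (L × A) → ℕ) :
    Submodule k (FV k (L × A)) :=
  (freeIFA k (L × A) (sOne A L)).idealGenBy (soupGensAll k A L σ N)


/-! Auxiliary material for the proof of Statement 12. -/

section Statement12Aux

open Function

namespace Stmt12

variable {k₀ : Type} [Field k₀] [CharZero k₀] {V₀ : Type} [AddCommGroup V₀] [Module k₀ V₀]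

instance (s : Shape) : DiscreteTopology (MonSp k₀ V₀ s) := ⟨rfl⟩

instance (l r : Shape) :
    TopologicalSpace (TensorProduct k₀ (MonSp k₀ V₀ l) (MonSp k₀ V₀ r)) := ⊥

instance (l r : Shape) :
    DiscreteTopology (TensorProduct k₀ (MonSp k₀ V₀ l) (MonSp k₀ V₀ r)) := ⟨rfl⟩

instance (s : Shape) : IsTopologicalAddGroup (MonSp k₀ V₀ s) where
  continuous_add := continuous_of_discreteTopology
  continuous_neg := continuous_of_discreteTopology

lemma op_leaf (n : ℤ) (x y : FV k₀ V₀) : op k₀ V₀ n x y Shape.leaf = 0 := rfl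

lemma op_node (n : ℤ) (x y : FV k₀ V₀) (m : ℤ) (l r : Shape) :
    op k₀ V₀ n x y (Shape.node m l r)
      = if n = m then TensorProduct.tmul k₀ (x l) (y r) else 0 := rfl

lemma freeIFA_circ (e : V₀) : (freeIFA k₀ V₀ e).circ = op k₀ V₀ := rfl

lemma freeIFA_one (e : V₀) : (freeIFA k₀ V₀ e).one = ι k₀ V₀ e := rfl

lemma freeIFA_D (e : V₀) (x : FV k₀ V₀) :
    (freeIFA k₀ V₀ e).D x = op k₀ V₀ (-2) x (ι k₀ V₀ e) := rfl

lemma op_add_left (n : ℤ) (x x' y : FV k₀ V₀) :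
    op k₀ V₀ n (x + x') y = op k₀ V₀ n x y + op k₀ V₀ n x' y := by
  exact (freeIFA k₀ V₀ 0).circ_add_left n x x' y

lemma op_smul_left (n : ℤ) (c : k₀) (x y : FV k₀ V₀) :
    op k₀ V₀ n (c • x) y = c • op k₀ V₀ n x y := by
  exact (freeIFA k₀ V₀ 0).circ_smul_left n c x y

lemma iota_neg (p : V₀) : ι k₀ V₀ (-p) = - ι k₀ V₀ p := by
  funext s
  cases s with
  | leaf => rfl
  | node m l r => exact (neg_zero).symm

/-- total number of internal nodes of a shape -/
def ssize : Shape → ℕ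
  | .leaf => 0
  | .node _ l r => ssize l + ssize r + 1

lemma supp_op (n : ℤ) (x y : FV k₀ V₀) (m : ℕ)
    (hx : ∀ s, ssize s < m → x s = 0) :
    ∀ s, ssize s < m + 1 → op k₀ V₀ n x y s = 0 := by
  intro s hs
  cases s with
  | leaf => rfl
  | node p l r =>
      rw [op_node]
      split
      · have hl : ssize l < m := by
          simp only [ssize] at hs; omega
        rw [hx l hl, TensorProduct.zero_tmul]
        rfl
      · rfl

lemma supp_D_iter (e : V₀) (x : FV k₀ V₀) (m : ℕ)
    (hx : ∀ s, ssize s < m → x s = 0) :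
    ∀ (K : ℕ) (s : Shape), ssize s < m + K → ((freeIFA k₀ V₀ e).D)^[K] x s = 0 := by
  intro K
  induction K with
  | zero =>
      intro s hs
      simpa using hx s (by simpa using hs)
  | succ K ih =>
      intro s hs
      rw [Function.iterate_succ_apply']
      rw [freeIFA_D]
      exact supp_op (-2) _ _ (m + K) ih s (by omega)

lemma summable_of_supp (f : ℕ → FV k₀ V₀) (h : ∀ K s, ssize s ≤ K → f K s = 0) :
    Summable f := by
  rw [Pi.summable]
  intro s
  apply summable_of_ne_finset_zero (s := Finset.range (ssize s + 1))
  intro K hK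
  exact h K s (by simp only [Finset.mem_range] at hK; omega)

/-- right multiplication `x ↦ x ∘ₙ y` as a continuous linear map -/
def opR (n : ℤ) (y : FV k₀ V₀) : FV k₀ V₀ →L[k₀] FV k₀ V₀ where
  toFun x := op k₀ V₀ n x y
  map_add' x x' := op_add_left n x x' y
  map_smul' c x := by simpa using op_smul_left n c x y
  cont := by
    apply continuous_pi
    intro s
    cases s with
    | leaf =>
        simp only [op_leaf]
        exact continuous_const
    | node m l r =>
        by_cases h : n = m
        · simp only [op_node, if_pos h]
          have hc : Continuous
              ((fun v => TensorProduct.tmul k₀ v (y r)) :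
                MonSp k₀ V₀ l → MonSp k₀ V₀ (Shape.node m l r)) :=
            continuous_of_discreteTopology
          exact hc.comp (continuous_apply l)
        · simp only [op_node, if_neg h]
          exact continuous_const

lemma opR_apply (n : ℤ) (y x : FV k₀ V₀) : opR n y x = op k₀ V₀ n x y := rfl

end Stmt12

section Key

open Function Stmt12

variable (k : Type) [Field k] [CharZero k] (A : Type) [CommRing A] [Algebra k A]
  (L : Type) [LieRing L] [LieAlgebra k L] [Module A L] [IsScalarTower k A L]

lemma stmt12_key (σ : SoupAct k A L) (N : (L × A) → (L × A) → ℕ) (a : A) (g : L)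
    (hga : σ.act g (σ.act g a) = 1) (J' : Submodule k (FV k (L × A)))
    (hId : (freeIFA k (L × A) (sOne A L)).IsIdeal J')
    (hS : soupGensAll k A L σ N ∪
        {op k (L × A) (-1) (ι k (L × A) (g, (0 : A))) (ι k (L × A) ((0 : L), a))
          - ι k (L × A) (a • g, (0 : A))} ⊆ (J' : Set (FV k (L × A)))) :
    ι k (L × A) (sOne A L) ∈ J' := by
  obtain ⟨hprod, hsum⟩ := hId
  set g' : FV k (L × A) := ι k (L × A) (g, (0 : A)) with hg'
  set a' : FV k (L × A) := ι k (L × A) ((0 : L), a) with ha'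
  set b' : FV k (L × A) := ι k (L × A) ((0 : L), σ.act g a) with hb'
  -- generator accessors
  have hgene : ∀ (x y : FV k (L × A)) (n : ℤ),
      (freeIFA k (L × A) (sOne A L)).gene x y n ∈ J' := by
    intro x y n
    exact hS (Or.inl (Or.inl (Or.inl (Or.inr ⟨x, y, n, rfl⟩))))
  have hqcmem : (freeIFA k (L × A) (sOne A L)).genqc g' a' (-1) ∈ J' :=
    hS (Or.inl (Or.inl (Or.inl (Or.inl (Or.inl (Or.inr ⟨g', a', -1, le_refl _, rfl⟩))))))
  have hsgen : ∀ p q : L × A,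
      op k (L × A) 0 (ι k (L × A) p) (ι k (L × A) q) - ι k (L × A) (σ.sBracket p q) ∈ J' := by
    intro p q
    exact hS (Or.inl (Or.inr (Or.inl (Or.inl ⟨p, q, rfl⟩))))
  have hagen : ∀ (c : A) (p : L × A),
      op k (L × A) (-1) (ι k (L × A) ((0 : L), c)) (ι k (L × A) p)
        - ι k (L × A) (aMul c p) ∈ J' := by
    intro c p
    exact hS (Or.inl (Or.inr (Or.inl (Or.inr ⟨c, p, rfl⟩))))
  -- the two "a·g" relations
  have m1 : op k (L × A) (-1) g' a' - ι k (L × A) (a • g, (0 : A)) ∈ J' :=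
    hS (Or.inr rfl)
  have m2 : op k (L × A) (-1) a' g' - ι k (L × A) (a • g, (0 : A)) ∈ J' := by
    have h := hagen a (g, (0 : A))
    simpa [aMul, mul_zero] using h
  have m3 : op k (L × A) (-1) g' a' - op k (L × A) (-1) a' g' ∈ J' := by
    have h := sub_mem m1 m2
    rwa [sub_sub_sub_cancel_right] at h
  -- the quasi-commutativity series
  set f : ℕ → FV k (L × A) := fun K =>
    (((-1 : k) ^ ((-1 : ℤ) + (K : ℤ))) * ((K.factorial : k)⁻¹)) •
      ((freeIFA k (L × A) (sOne A L)).D)^[K]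
        (op k (L × A) ((-1 : ℤ) + (K : ℤ)) a' g') with hfdef
  have hqc_eq : (freeIFA k (L × A) (sOne A L)).genqc g' a' (-1)
      = op k (L × A) (-1) g' a' + ∑' K, f K := rfl
  have hsuppf : ∀ K s, ssize s ≤ K → f K s = 0 := by
    intro K s hs
    have hbase0 : ∀ t, ssize t < 1 →
        op k (L × A) ((-1 : ℤ) + (K : ℤ)) a' g' t = 0 := by
      intro t ht
      cases t with
      | leaf => rfl
      | node m l r => simp [ssize] at ht
    have h := supp_D_iter (sOne A L) _ 1 hbase0 K s (by omega)
    simp only [hfdef, Pi.smul_apply, h, smul_zero]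
  have hsumf : Summable f := summable_of_supp f hsuppf
  set G : ℕ → FV k (L × A) := fun K => op k (L × A) 1 (f K) g' with hGdef
  have hsumG : Summable G := by
    have h := hsumf.map (opR 1 g') (opR 1 g').continuous
    exact h
  have hW : op k (L × A) (-1) a' g' + ∑' K, f K ∈ J' := by
    have h := sub_mem hqcmem m3
    rw [hqc_eq] at h
    have e : (op k (L × A) (-1) g' a' + ∑' K, f K)
        - (op k (L × A) (-1) g' a' - op k (L × A) (-1) a' g')
        = op k (L × A) (-1) a' g' + ∑' K, f K := by abel
    rwa [e] at h
  have m6 : op k (L × A) 1 (op k (L × A) (-1) a' g' + ∑' K, f K) g' ∈ J' :=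
    (hprod 1 g' _ hW).2
  have hcomp : op k (L × A) 1 (op k (L × A) (-1) a' g' + ∑' K, f K) g'
      = op k (L × A) 1 (op k (L × A) (-1) a' g') g' + ∑' K, G K := by
    rw [op_add_left]
    congr 1
    exact (opR 1 g').map_tsum hsumf
  have hsumG1 : Summable (fun K => G (K + 1)) := (summable_nat_add_iff 1).mpr hsumG
  have hsumG2 : Summable (fun K => G (K + 2)) := (summable_nat_add_iff 2).mpr hsumG
  have hsplit : ∑' K, G K = G 0 + (G 1 + ∑' K, G (K + 2)) := by
    rw [hsumG.tsum_eq_zero_add, hsumG1.tsum_eq_zero_add]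
  have hG0 : G 0 = -(op k (L × A) 1 (op k (L × A) (-1) a' g') g') := by
    have hf0 : f 0 = (-1 : k) • op k (L × A) (-1) a' g' := by
      simp only [hfdef]
      norm_num [zpow_neg, zpow_one]
    show op k (L × A) 1 (f 0) g' = _
    rw [hf0, op_smul_left, neg_one_smul]
  have hG1 : G 1 = (freeIFA k (L × A) (sOne A L)).gene (op k (L × A) 0 a' g') g' 1
      - op k (L × A) 0 (op k (L × A) 0 a' g') g' := by
    have hf1 : f 1 = (freeIFA k (L × A) (sOne A L)).D (op k (L × A) 0 a' g') := by
      simp only [hfdef]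
      norm_num
    have hg1 : (freeIFA k (L × A) (sOne A L)).gene (op k (L × A) 0 a' g') g' 1
        = op k (L × A) 1 ((freeIFA k (L × A) (sOne A L)).D (op k (L × A) 0 a' g')) g'
          + op k (L × A) 0 (op k (L × A) 0 a' g') g' := by
      unfold IFA.gene
      norm_num [freeIFA_circ]
    show op k (L × A) 1 (f 1) g' = _
    rw [hf1, hg1]
    abel
  have htail : ∀ K : ℕ, G (K + 2) ∈ J' := by
    intro K
    show op k (L × A) 1 (f (K + 2)) g' ∈ J'
    simp only [hfdef]
    rw [op_smul_left]
    apply Submodule.smul_mem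
    set u : FV k (L × A) := op k (L × A) ((-1 : ℤ) + ((K + 2 : ℕ) : ℤ)) a' g' with hu
    have hA : (freeIFA k (L × A) (sOne A L)).gene
        (((freeIFA k (L × A) (sOne A L)).D)^[K] u) g' 0
        = op k (L × A) 0 (((freeIFA k (L × A) (sOne A L)).D)^[K + 1] u) g' := by
      unfold IFA.gene
      simp only [freeIFA_circ, Int.cast_zero, zero_smul, add_zero,
        Function.iterate_succ_apply']
    have hB : (freeIFA k (L × A) (sOne A L)).gene
        (((freeIFA k (L × A) (sOne A L)).D)^[K + 1] u) g' 1
        = op k (L × A) 1 (((freeIFA k (L × A) (sOne A L)).D)^[K + 2] u) g'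
          + op k (L × A) 0 (((freeIFA k (L × A) (sOne A L)).D)^[K + 1] u) g' := by
      unfold IFA.gene
      simp only [freeIFA_circ, Int.cast_one, one_smul, sub_self,
        show K + 2 = (K + 1) + 1 from rfl, Function.iterate_succ_apply']
    have heq : op k (L × A) 1 (((freeIFA k (L × A) (sOne A L)).D)^[K + 2] u) g'
        = (freeIFA k (L × A) (sOne A L)).gene
            (((freeIFA k (L × A) (sOne A L)).D)^[K + 1] u) g' 1
          - (freeIFA k (L × A) (sOne A L)).gene
            (((freeIFA k (L × A) (sOne A L)).D)^[K] u) g' 0 := by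
      rw [hB, hA]
      abel
    rw [heq]
    exact sub_mem (hgene _ _ _) (hgene _ _ _)
  have hTmem : (∑' K, G (K + 2)) ∈ J' := hsum _ htail hsumG2
  have hX : op k (L × A) 0 (op k (L × A) 0 a' g') g'
      = (freeIFA k (L × A) (sOne A L)).gene (op k (L × A) 0 a' g') g' 1
          + ∑' K, G (K + 2)
        - op k (L × A) 1 (op k (L × A) (-1) a' g' + ∑' K, f K) g' := by
    rw [hcomp, hsplit, hG0, hG1]
    abel
  have hXmem : op k (L × A) 0 (op k (L × A) 0 a' g') g' ∈ J' := by
    rw [hX]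
    exact sub_mem (add_mem (hgene _ _ _) hTmem) m6
  -- now peel off using the s-bracket generators
  have hs1 : op k (L × A) 0 a' g' - ι k (L × A) (σ.sBracket ((0 : L), a) (g, (0 : A))) ∈ J' :=
    hsgen ((0 : L), a) (g, (0 : A))
  have hbr1 : σ.sBracket ((0 : L), a) (g, (0 : A)) = -(((0 : L), σ.act g a) : L × A) := by
    simp [SoupAct.sBracket, Prod.neg_mk, zero_lie, map_zero, zero_sub]
  have hs1' : op k (L × A) 0 a' g' + b' ∈ J' := by
    rw [hbr1, iota_neg, sub_neg_eq_add] at hs1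
    exact hs1
  have hb2 : op k (L × A) 0 b' g'
      = op k (L × A) 0 (op k (L × A) 0 a' g' + b') g'
        - op k (L × A) 0 (op k (L × A) 0 a' g') g' := by
    rw [op_add_left]
    abel
  have hbmem : op k (L × A) 0 b' g' ∈ J' := by
    rw [hb2]
    exact sub_mem ((hprod 0 g' _ hs1').2) hXmem
  have hs2 : op k (L × A) 0 b' g'
      - ι k (L × A) (σ.sBracket ((0 : L), σ.act g a) (g, (0 : A))) ∈ J' :=
    hsgen ((0 : L), σ.act g a) (g, (0 : A))
  have hbr2 : σ.sBracket ((0 : L), σ.act g a) (g, (0 : A)) = -(sOne A L) := by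
    simp [SoupAct.sBracket, sOne, Prod.neg_mk, zero_lie, map_zero, zero_sub, hga]
  have hs2' : op k (L × A) 0 b' g' + ι k (L × A) (sOne A L) ∈ J' := by
    rw [hbr2, iota_neg, sub_neg_eq_add] at hs2
    exact hs2
  have hfin : ι k (L × A) (sOne A L)
      = (op k (L × A) 0 b' g' + ι k (L × A) (sOne A L)) - op k (L × A) 0 b' g' := by
    abel
  rw [hfin]
  exact sub_mem hs2' hbmem

end Key

end Statement12Aux

/-- **obstruction to right `a`-multiplication.** Let `s = s(g,a)` be a
souped-up Lie algebra containing `a ∈ a`, `g ∈ g` with `[g,[g,a]] = 1`.  For any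
locality function `N`, the ideal `J` generated by the souped-up vertex algebra ideal
`I(s)` together with the single element `g ∘₋₁ a − a·g` contains `1`; consequently
`J = F(s)` and the quotient `F(s)/J` is zero. -/
theorem statement12 (k : Type) [Field k] [CharZero k] (A : Type) [CommRing A]
    [Algebra k A] [Nontrivial A] (L : Type) [LieRing L] [LieAlgebra k L] [Module A L]
    [IsScalarTower k A L] (σ : SoupAct k A L) (N : (L × A) → (L × A) → ℕ)
    (a : A) (g : L) (hga : σ.act g (σ.act g a) = 1) :
    ι k (L × A) (sOne A L) ∈
        (freeIFA k (L × A) (sOne A L)).idealGenBy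
          (soupGensAll k A L σ N ∪
            {op k (L × A) (-1) (ι k (L × A) (g, (0 : A))) (ι k (L × A) ((0 : L), a))
              - ι k (L × A) (a • g, (0 : A))}) ∧
      (freeIFA k (L × A) (sOne A L)).idealGenBy
          (soupGensAll k A L σ N ∪
            {op k (L × A) (-1) (ι k (L × A) (g, (0 : A))) (ι k (L × A) ((0 : L), a))
              - ι k (L × A) (a • g, (0 : A))}) = ⊤ := by
  have hkey := stmt12_key k A L σ N a g hga
  constructor
  · rw [IFA.idealGenBy, Submodule.mem_sInf]
    rintro J' ⟨hId, hSS⟩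
    exact hkey J' hId hSS
  · rw [eq_top_iff]
    rintro x -
    rw [IFA.idealGenBy, Submodule.mem_sInf]
    rintro J' ⟨hId, hSS⟩
    have hone := hkey J' hId hSS
    have hgeni : (freeIFA k (L × A) (sOne A L)).geni x (-1) ∈ J' :=
      hSS (Or.inl (Or.inl (Or.inl (Or.inl (Or.inl (Or.inl (Or.inl ⟨x, -1, le_refl _, rfl⟩)))))))
    have hx : x = (freeIFA k (L × A) (sOne A L)).circ (-1) (freeIFA k (L × A) (sOne A L)).one x
        - (freeIFA k (L × A) (sOne A L)).geni x (-1) := by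
      unfold IFA.geni
      simp
    rw [hx]
    exact sub_mem ((hId.1 (-1) x _ hone).2) hgeni
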